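/- Let G act by isometries on a δ-hyperbolic geodesic space X, let H ≤ G be finitely generated with the orbit map h ↦ hx₀ a quasi-isometric embedding whose image Hx₀ is λ-quasi-convex. Suppose the action is acylindrical along Hx₀ in the sense: for every ε ≥ 0 there are R(ε), M(ε) > 0 so that for x, y ∈ Hx₀ with d(x,y) ≥ R(ε), #{g ∈ G : d(gx,x) ≤ ε, d(gy,y) ≤ ε} ≤ M(ε). Then for every ε ≥ 0 there exist D, N > 0 such that any collection of distinct cosets g₁H, …, g_nH with diam(⋂_{i=1}^n N_ε(g_i H x₀)) > D satisfies n ≤ N. -/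

import Mathlib

open Metric Set

/-- The Gromov product `(x∣y)_w`. -/
noncomputable def gprod {X : Type*} [MetricSpace X] (w x y : X) : ℝ :=
  (dist w x + dist w y - dist x y) / 2

/-- A geodesic metric space. -/
def IsGeodesicSpace (X : Type*) [MetricSpace X] : Prop :=
  ∀ x y : X, ∃ γ : ℝ → X, γ 0 = x ∧ γ (dist x y) = y ∧
    ∀ s ∈ Set.Icc (0:ℝ) (dist x y), ∀ t ∈ Set.Icc (0:ℝ) (dist x y),
      dist (γ s) (γ t) = |s - t|

/-- Word length with respect to a (symmetrized) generating set `S`. -/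
noncomputable def wlen {G : Type*} [Group G] (S : Set G) (g : G) : ℕ :=
  sInf {n | ∃ l : List G, l.length = n ∧ (∀ x ∈ l, x ∈ S ∨ x⁻¹ ∈ S) ∧ l.prod = g}

private lemma gprod_comm {X : Type*} [MetricSpace X] (w x y : X) :
    gprod w x y = gprod w y x := by
  simp only [gprod, dist_comm x y, dist_comm w x, dist_comm w y]
  ring

private lemma geod_compare {X : Type*} [MetricSpace X] {δ : ℝ} (hδ : 0 ≤ δ)
    (hhyp : ∀ w x y z : X, min (gprod w x y) (gprod w y z) - δ ≤ gprod w x z)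
    {a b c : X} {γ₁ γ₂ : ℝ → X}
    (h10 : γ₁ 0 = a) (h1b : γ₁ (dist a b) = b)
    (h1iso : ∀ s ∈ Set.Icc (0:ℝ) (dist a b), ∀ t ∈ Set.Icc (0:ℝ) (dist a b),
      dist (γ₁ s) (γ₁ t) = |s - t|)
    (h20 : γ₂ 0 = a) (h2c : γ₂ (dist a c) = c)
    (h2iso : ∀ s ∈ Set.Icc (0:ℝ) (dist a c), ∀ t ∈ Set.Icc (0:ℝ) (dist a c),
      dist (γ₂ s) (γ₂ t) = |s - t|)
    {s : ℝ} (hs0 : 0 ≤ s) (hs1 : s ≤ dist a b) (hs2 : s ≤ dist a c)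
    (hsp : s ≤ gprod a b c) : dist (γ₁ s) (γ₂ s) ≤ 4 * δ := by
  have hab : (0:ℝ) ≤ dist a b := dist_nonneg
  have hac : (0:ℝ) ≤ dist a c := dist_nonneg
  have e1 : dist a (γ₁ s) = s := by
    have h := h1iso 0 ⟨le_rfl, hab⟩ s ⟨hs0, hs1⟩
    rw [h10] at h
    rw [h, zero_sub, abs_neg, abs_of_nonneg hs0]
  have e2 : dist (γ₁ s) b = dist a b - s := by
    have h := h1iso s ⟨hs0, hs1⟩ (dist a b) ⟨hab, le_rfl⟩
    rw [h1b] at h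
    rw [h, abs_of_nonpos (by linarith), neg_sub]
  have e3 : dist a (γ₂ s) = s := by
    have h := h2iso 0 ⟨le_rfl, hac⟩ s ⟨hs0, hs2⟩
    rw [h20] at h
    rw [h, zero_sub, abs_neg, abs_of_nonneg hs0]
  have e4 : dist (γ₂ s) c = dist a c - s := by
    have h := h2iso s ⟨hs0, hs2⟩ (dist a c) ⟨hac, le_rfl⟩
    rw [h2c] at h
    rw [h, abs_of_nonpos (by linarith), neg_sub]
  have p1 : gprod a b (γ₁ s) = s := by
    simp only [gprod, dist_comm b (γ₁ s)]
    rw [e1, e2]; ring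
  have p2 : gprod a c (γ₂ s) = s := by
    simp only [gprod, dist_comm c (γ₂ s)]
    rw [e3, e4]; ring
  have q1 : s - δ ≤ gprod a b (γ₂ s) := by
    have h := hhyp a b c (γ₂ s)
    rw [p2, min_eq_right hsp] at h
    exact h
  have q2 : s - δ - δ ≤ gprod a (γ₁ s) (γ₂ s) := by
    have h := hhyp a (γ₁ s) b (γ₂ s)
    have hm : s - δ ≤ min (gprod a (γ₁ s) b) (gprod a b (γ₂ s)) := by
      refine le_min ?_ q1
      rw [gprod_comm, p1]; linarith
    exact le_trans (by linarith : s - δ - δ ≤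
      min (gprod a (γ₁ s) b) (gprod a b (γ₂ s)) - δ) h
  have final : gprod a (γ₁ s) (γ₂ s) = (s + s - dist (γ₁ s) (γ₂ s)) / 2 := by
    simp only [gprod, e1, e3]
  rw [final] at q2
  linarith

private lemma finite_word_ball {G : Type*} [Group G] (S : Set G) (hS : S.Finite) (n : ℕ) :
    {g : G | ∃ l : List G, l.length ≤ n ∧ (∀ x ∈ l, x ∈ S ∨ x⁻¹ ∈ S) ∧ l.prod = g}.Finite := by
  induction n with
  | zero =>
    apply Set.Finite.subset (Set.finite_singleton (1 : G))
    rintro g ⟨l, hl, -, rfl⟩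
    have : l = [] := List.length_eq_zero_iff.mp (Nat.le_zero.mp hl)
    simp [this]
  | succ n ih =>
    apply Set.Finite.subset
      (ih.union (((hS.union hS.inv).prod ih).image (fun p : G × G => p.1 * p.2)))
    rintro g ⟨l, hl, hmem, rfl⟩
    cases l with
    | nil => exact Or.inl ⟨[], by simp⟩
    | cons a l' =>
      right
      refine ⟨(a, l'.prod), ⟨?_, ⟨l', ?_, fun x hx => hmem x (List.mem_cons_of_mem a hx), rfl⟩⟩, by simp⟩
      · rcases hmem a List.mem_cons_self with h | h
        · exact Or.inl h
        · exact Or.inr (Set.mem_inv.mpr h)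
      · simpa using Nat.succ_le_succ_iff.mp (by simpa using hl)


/-- Theorem 3.5, forward direction: pointwise acylindricity along the
λ-quasi-convex orbit `Hx₀` (Definition B) implies the coset-intersection form
(Definition A). -/
theorem acyl_defB_implies_defA
    {G X : Type*} [Group G] [MetricSpace X] [MulAction G X]
    (hiso : ∀ (g : G) (x y : X), dist (g • x) (g • y) = dist x y)
    (δ : ℝ) (hδ : 0 ≤ δ)
    (hhyp : ∀ w x y z : X, min (gprod w x y) (gprod w y z) - δ ≤ gprod w x z)
    (hgeo : IsGeodesicSpace X)
    (x₀ : X) (H : Subgroup G)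
    -- H is finitely generated and quasi-isometrically embedded by the orbit map
    (S : Set G) (hSfin : S.Finite) (hSgen : Subgroup.closure S = H)
    (C : ℝ) (hC : 1 ≤ C)
    (hqie : ∀ h ∈ H, (wlen S h : ℝ) / C - C ≤ dist (h • x₀) x₀ ∧
      dist (h • x₀) x₀ ≤ C * (wlen S h) + C)
    -- λ-quasi-convexity of the orbit Hx₀
    (lam : ℝ) (hlam : 0 ≤ lam)
    (hqc : ∀ a ∈ (fun h : G => h • x₀) '' (H : Set G),
      ∀ b ∈ (fun h : G => h • x₀) '' (H : Set G),
      ∀ γ : ℝ → X, γ 0 = a → γ (dist a b) = b →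
        (∀ s ∈ Set.Icc (0:ℝ) (dist a b), ∀ t ∈ Set.Icc (0:ℝ) (dist a b),
          dist (γ s) (γ t) = |s - t|) →
        ∀ u ∈ Set.Icc (0:ℝ) (dist a b),
          infDist (γ u) ((fun h : G => h • x₀) '' (H : Set G)) ≤ lam)
    -- Definition B, with constants R(ε), M(ε)
    (R : ℝ → ℝ) (M : ℝ → ℕ)
    (hB : ∀ ε : ℝ, 0 ≤ ε →
      ∀ x ∈ (fun h : G => h • x₀) '' (H : Set G),
      ∀ y ∈ (fun h : G => h • x₀) '' (H : Set G),
        R ε ≤ dist x y →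
          ({g : G | dist (g • x) x ≤ ε ∧ dist (g • y) y ≤ ε}).Finite ∧
          ({g : G | dist (g • x) x ≤ ε ∧ dist (g • y) y ≤ ε}).ncard ≤ M ε) :
    ∀ ε : ℝ, 0 ≤ ε → ∃ D : ℝ, ∃ N : ℕ,
      ∀ T : Finset G,
        (∀ g ∈ T, ∀ g' ∈ T, g ≠ g' → g⁻¹ * g' ∉ H) →
        (∃ z w : X, (∀ g ∈ T, (∃ h ∈ H, dist z ((g * h) • x₀) ≤ ε) ∧
            (∃ h ∈ H, dist w ((g * h) • x₀) ≤ ε)) ∧ D < dist z w) →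
        T.card ≤ N := by

  classical
  intro ε hε
  set Y := (fun h : G => h • x₀) '' (H : Set G) with hYdef
  have hYne : Y.Nonempty := ⟨x₀, ⟨1, H.one_mem, one_smul G x₀⟩⟩
  have hx₀Y : x₀ ∈ Y := ⟨1, H.one_mem, one_smul G x₀⟩
  set Ey : ℝ := 2*lam + 2 + 8*δ with hEydef
  set ε' : ℝ := 4*ε + 4*lam + 4 + 16*δ with hε'def
  have hε'0 : 0 ≤ ε' := by simp only [hε'def]; linarith
  set r : ℝ := max (R ε') 0 with hrdef
  set t : ℝ := r + lam + 2*ε + 2 with htdef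
  have hr0 : 0 ≤ r := le_max_right _ _
  have ht0 : 0 ≤ t := by simp only [htdef]; linarith
  have ht2ε : 2*ε ≤ t := by simp only [htdef]; linarith
  set ρ : ℝ := Ey + t + lam + 1 + 2*ε with hρdef
  have hρ0 : 0 ≤ ρ := by simp only [hρdef, hEydef]; linarith
  set D : ℝ := t + 4*ε + 1 with hDdef
  have hC0 : (0:ℝ) < C := lt_of_lt_of_le one_pos hC
  -- finiteness of the ρ-ball in H
  have hBallfin : {h : G | h ∈ H ∧ dist (h • x₀) x₀ ≤ ρ}.Finite := by
    apply Set.Finite.subset (finite_word_ball S hSfin ⌊C*(ρ+C)⌋₊)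
    rintro h ⟨hH, hd⟩
    have h1 := (hqie h hH).1
    have hw : (wlen S h : ℝ) ≤ C*(ρ + C) := by
      have h2 : (wlen S h : ℝ)/C - C ≤ ρ := le_trans h1 hd
      have h3 : (wlen S h : ℝ) ≤ C * ρ + C * C := by
        have := (div_le_iff₀ hC0).mp (by linarith : (wlen S h : ℝ)/C ≤ ρ + C)
        linarith [this]
      nlinarith
    have hwn : wlen S h ≤ ⌊C*(ρ+C)⌋₊ := Nat.le_floor hw
    have hne : {n | ∃ l : List G, l.length = n ∧ (∀ x ∈ l, x ∈ S ∨ x⁻¹ ∈ S) ∧ l.prod = h}.Nonempty := by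
      have hmem : h ∈ Subgroup.closure S := by rw [hSgen]; exact hH
      have hmem2 : h ∈ Submonoid.closure (S ∪ S⁻¹) := by
        rw [← Subgroup.closure_toSubmonoid]; exact hmem
      obtain ⟨l, hl1, hl2⟩ := Submonoid.exists_list_of_mem_closure hmem2
      refine ⟨l.length, l, rfl, fun x hx => ?_, hl2⟩
      rcases hl1 x hx with h' | h'
      · exact Or.inl h'
      · exact Or.inr (Set.mem_inv.mp h')
    obtain ⟨l, hlen, hmem, hprod⟩ := Nat.sInf_mem hne
    exact ⟨l, by rw [hlen]; exact hwn, hmem, hprod⟩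
  refine ⟨D, M ε' * hBallfin.toFinset.card, ?_⟩
  intro T hcosets ⟨z, w, hTzw, hzwD⟩
  rcases T.eq_empty_or_nonempty with rfl | ⟨g₁, hg₁⟩
  · simp
  obtain ⟨⟨h₁, h₁H, hzh₁⟩, ⟨h₁', h₁'H, hwh₁'⟩⟩ := hTzw g₁ hg₁
  set A : G := g₁ * h₁ with hAdef
  set z' := A⁻¹ • z with hz'def
  set w' := A⁻¹ • w with hw'def
  have transl : ∀ (u : X) (g : G), dist (A⁻¹ • u) ((A⁻¹ * g) • x₀) = dist u (g • x₀) := by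
    intro u g
    rw [mul_smul]
    exact hiso A⁻¹ u (g • x₀)
  have hdzw : dist z' w' = dist z w := hiso A⁻¹ z w
  have hDzw : D < dist z' w' := by rw [hdzw]; exact hzwD
  have hzx₀ : dist z' x₀ ≤ ε := by
    have h1 : dist z' ((A⁻¹ * (g₁ * h₁)) • x₀) = dist z ((g₁ * h₁) • x₀) := transl z (g₁ * h₁)
    rw [← hAdef, inv_mul_cancel, one_smul] at h1
    rw [h1]; exact hzh₁
  set y₁ : X := (h₁⁻¹ * h₁') • x₀ with hy₁def
  have hwy₁ : dist w' y₁ ≤ ε := by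
    have h1 : dist w' ((A⁻¹ * (g₁ * h₁')) • x₀) = dist w ((g₁ * h₁') • x₀) := transl w (g₁ * h₁')
    have h2 : A⁻¹ * (g₁ * h₁') = h₁⁻¹ * h₁' := by
      rw [hAdef]; group
    rw [h2] at h1
    rw [hy₁def, h1]; exact hwh₁'
  have hy₁far : D - 2*ε ≤ dist x₀ y₁ := by
    have h1 := dist_triangle4 z' x₀ y₁ w'
    have h2 : dist y₁ w' = dist w' y₁ := dist_comm _ _
    linarith
  obtain ⟨γ, hγ0, hγ1, hγiso⟩ := hgeo x₀ y₁
  have htle : t ≤ dist x₀ y₁ := by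
    have : D - 2*ε = t + 2*ε + 1 := by rw [hDdef]; ring
    linarith
  have hy₁Y : y₁ ∈ Y := ⟨h₁⁻¹ * h₁', mul_mem (inv_mem h₁H) h₁'H, rfl⟩
  have hqct := hqc x₀ hx₀Y y₁ hy₁Y γ hγ0 hγ1 hγiso t ⟨ht0, htle⟩
  obtain ⟨yp, hypY, hypd⟩ := (infDist_lt_iff hYne).mp (lt_of_le_of_lt hqct (lt_add_one lam))
  obtain ⟨h_y, h_yH, rfl⟩ := hypY
  set y : X := h_y • x₀ with hydef
  have hty : dist x₀ (γ t) = t := by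
    have h := hγiso 0 ⟨le_rfl, dist_nonneg⟩ t ⟨ht0, htle⟩
    rw [hγ0] at h
    rw [h, zero_sub, abs_neg, abs_of_nonneg ht0]
  have hyγ : dist y (γ t) < lam + 1 := by
    rw [dist_comm]; exact hypd
  have hyx₀ : dist x₀ y ≤ t + lam + 1 := by
    have := dist_triangle x₀ (γ t) y
    rw [hty] at this
    have h2 : dist (γ t) y = dist y (γ t) := dist_comm _ _
    linarith
  have hyx₀' : t - (lam+1) ≤ dist x₀ y := by
    have h2 := dist_triangle x₀ y (γ t)
    linarith [hty, hyγ, h2]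
  have hRy : R ε' ≤ dist x₀ y := by
    have h1 : R ε' ≤ r := le_max_left _ _
    have h2 : t - (lam + 1) = r + 2*ε + 1 := by rw [htdef]; ring
    linarith
  have hyY : y ∈ Y := ⟨h_y, h_yH, rfl⟩
  -- key construction
  have key : ∀ g ∈ T, ∃ cg dg : G, cg ∈ H ∧ dg ∈ H ∧
      dist ((A⁻¹ * g * cg) • x₀) x₀ ≤ 2*ε ∧ dist ((A⁻¹ * g * dg) • x₀) y ≤ Ey := by
    intro g hg
    obtain ⟨⟨h, hH, hzg⟩, ⟨h', h'H, hwg⟩⟩ := hTzw g hg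
    set p : X := (A⁻¹ * g * h) • x₀ with hpdef
    set q : X := (A⁻¹ * g * h') • x₀ with hqdef
    have hzp : dist z' p ≤ ε := by
      have h1 : dist z' ((A⁻¹ * (g * h)) • x₀) = dist z ((g * h) • x₀) := transl z (g * h)
      rw [← mul_assoc] at h1
      rw [hpdef, h1]; exact hzg
    have hwq : dist w' q ≤ ε := by
      have h1 : dist w' ((A⁻¹ * (g * h')) • x₀) = dist w ((g * h') • x₀) := transl w (g * h')
      rw [← mul_assoc] at h1
      rw [hqdef, h1]; exact hwg
    have hpx₀ : dist p x₀ ≤ 2*ε := by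
      have := dist_triangle p z' x₀
      rw [dist_comm p z'] at this
      linarith
    have hqfar : D - 2*ε ≤ dist x₀ q := by
      have h1 := dist_triangle4 z' x₀ q w'
      rw [dist_comm q w'] at h1
      linarith
    have htq : t ≤ dist x₀ q := by
      have : D - 2*ε = t + 2*ε + 1 := by rw [hDdef]; ring
      linarith
    have hy₁q : dist y₁ q ≤ 2*ε := by
      have := dist_triangle y₁ w' q
      rw [dist_comm y₁ w'] at this
      linarith
    obtain ⟨γ', hγ'0, hγ'1, hγ'iso⟩ := hgeo x₀ q
    have hstep1 : dist (γ t) (γ' t) ≤ 4*δ := by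
      refine geod_compare hδ hhyp hγ0 hγ1 hγiso hγ'0 hγ'1 hγ'iso ht0 htle htq ?_
      simp only [gprod]
      linarith
    -- geodesic in H-orbit between h' • x₀ and h • x₀
    obtain ⟨σ, hσ0, hσ1, hσiso⟩ := hgeo (h' • x₀) (h • x₀)
    have hqsmul : q = (A⁻¹ * g) • (h' • x₀) := by
      rw [hqdef, ← mul_smul, mul_assoc]
    have hpsmul : p = (A⁻¹ * g) • (h • x₀) := by
      rw [hpdef, ← mul_smul, mul_assoc]
    have hqp_dist : dist q p = dist (h' • x₀) (h • x₀) := by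
      rw [hqsmul, hpsmul]; exact hiso _ _ _
    set γB : ℝ → X := fun s => (A⁻¹ * g) • σ s with hγBdef
    have hγB0 : γB 0 = q := by rw [hγBdef]; simp only; rw [hσ0, hqsmul]
    have hγBd : γB (dist q p) = p := by
      rw [hγBdef]; simp only; rw [hqp_dist, hσ1, hpsmul]
    have hγBiso : ∀ s ∈ Set.Icc (0:ℝ) (dist q p), ∀ u ∈ Set.Icc (0:ℝ) (dist q p),
        dist (γB s) (γB u) = |s - u| := by
      intro s hs u hu
      rw [hqp_dist] at hs hu
      rw [hγBdef]; simp only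
      rw [hiso]
      exact hσiso s hs u hu
    set γR : ℝ → X := fun s => γ' (dist x₀ q - s) with hγRdef
    have hγR0 : γR 0 = q := by rw [hγRdef]; simp only [sub_zero]; exact hγ'1
    have hγRd : γR (dist q x₀) = x₀ := by
      rw [hγRdef]; simp only [dist_comm q x₀, sub_self]; exact hγ'0
    have hγRiso : ∀ s ∈ Set.Icc (0:ℝ) (dist q x₀), ∀ u ∈ Set.Icc (0:ℝ) (dist q x₀),
        dist (γR s) (γR u) = |s - u| := by
      intro s hs u hu
      rw [dist_comm q x₀] at hs hu
      have h1 := hγ'iso (dist x₀ q - s) ⟨by linarith [hs.2], by linarith [hs.1]⟩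
        (dist x₀ q - u) ⟨by linarith [hu.2], by linarith [hu.1]⟩
      rw [hγRdef]; simp only
      rw [h1]
      rw [show dist x₀ q - s - (dist x₀ q - u) = -(s - u) by ring, abs_neg]
    set s₂ : ℝ := dist x₀ q - t with hs₂def
    have hs₂0 : 0 ≤ s₂ := by simp only [hs₂def]; linarith
    have hs₂le1 : s₂ ≤ dist q x₀ := by
      rw [dist_comm q x₀]; simp only [hs₂def]; linarith
    have hxp : dist x₀ p ≤ 2*ε := by rw [dist_comm]; exact hpx₀
    have hs₂le2 : s₂ ≤ dist q p := by
      have := dist_triangle x₀ p q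
      rw [dist_comm p q] at this
      simp only [hs₂def]
      linarith
    have hs₂gp : s₂ ≤ gprod q x₀ p := by
      simp only [gprod, hs₂def, dist_comm q x₀]
      have := dist_triangle x₀ p q
      rw [dist_comm p q] at this
      linarith
    have hstep2 : dist (γR s₂) (γB s₂) ≤ 4*δ :=
      geod_compare hδ hhyp hγR0 hγRd hγRiso hγB0 hγBd hγBiso hs₂0 hs₂le1 hs₂le2 hs₂gp
    have hγRs₂ : γR s₂ = γ' t := by
      rw [hγRdef]; simp only [hs₂def]
      norm_num
    rw [hγRs₂] at hstep2
    have hyB : dist y (γB s₂) ≤ lam + 1 + 8*δ := by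
      have h1 := dist_triangle4 y (γ t) (γ' t) (γB s₂)
      linarith
    -- quasiconvexity along σ
    have hs₂Icc : s₂ ∈ Set.Icc (0:ℝ) (dist (h' • x₀) (h • x₀)) := by
      rw [← hqp_dist]; exact ⟨hs₂0, hs₂le2⟩
    have hqcσ := hqc (h' • x₀) ⟨h', h'H, rfl⟩ (h • x₀) ⟨h, hH, rfl⟩ σ hσ0 hσ1 hσiso s₂ hs₂Icc
    obtain ⟨up, hupY, hupd⟩ := (infDist_lt_iff hYne).mp (lt_of_le_of_lt hqcσ (lt_add_one lam))
    obtain ⟨hd', hd'H, rfl⟩ := hupY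
    refine ⟨h, hd', hH, hd'H, hpx₀, ?_⟩
    have hsmul : (A⁻¹ * g * hd') • x₀ = (A⁻¹ * g) • (hd' • x₀) := by
      rw [← mul_smul, mul_assoc]
    have hdd : dist ((A⁻¹ * g * hd') • x₀) (γB s₂) = dist (hd' • x₀) (σ s₂) := by
      rw [hsmul, hγBdef]; exact hiso _ _ _
    have h1 := dist_triangle ((A⁻¹ * g * hd') • x₀) (γB s₂) y
    rw [hdd] at h1
    have h2 : dist (hd' • x₀) (σ s₂) < lam + 1 := by rw [dist_comm]; exact hupd
    have h3 : dist (γB s₂) y = dist y (γB s₂) := dist_comm _ _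
    simp only [hEydef]
    linarith
  -- choose the data
  choose cf df cfH dfH hcf hdf using key
  set cc : G → G := fun g => if hg : g ∈ T then A⁻¹ * g * cf g hg else 1 with hccdef
  set dd : G → G := fun g => if hg : g ∈ T then A⁻¹ * g * df g hg else 1 with hdddef
  set F : G → G := fun g => (cc g)⁻¹ * dd g with hFdef
  have hccT : ∀ g (hg : g ∈ T), cc g = A⁻¹ * g * cf g hg := by
    intro g hg; simp only [hccdef, dif_pos hg]
  have hddT : ∀ g (hg : g ∈ T), dd g = A⁻¹ * g * df g hg := by
    intro g hg; simp only [hdddef, dif_pos hg]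
  have hccd : ∀ g (hg : g ∈ T), dist (cc g • x₀) x₀ ≤ 2*ε := by
    intro g hg; rw [hccT g hg]; exact hcf g hg
  have hddd : ∀ g (hg : g ∈ T), dist (dd g • x₀) y ≤ Ey := by
    intro g hg; rw [hddT g hg]; exact hdf g hg
  -- injectivity helper: cc determines g
  have hccinj : ∀ g (hg : g ∈ T), ∀ g' (hg' : g' ∈ T), cc g = cc g' → g = g' := by
    intro g hg g' hg' hcc
    by_contra hne
    apply hcosets g hg g' hg' hne
    rw [hccT g hg, hccT g' hg'] at hcc
    have hgc : g * cf g hg = g' * cf g' hg' := by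
      rw [mul_assoc, mul_assoc] at hcc
      exact mul_left_cancel hcc
    have hg'eq : g' = g * cf g hg * (cf g' hg')⁻¹ := by
      rw [eq_mul_inv_iff_mul_eq]; exact hgc.symm
    rw [hg'eq]
    have hgrp : g⁻¹ * (g * cf g hg * (cf g' hg')⁻¹) = cf g hg * (cf g' hg')⁻¹ := by group
    rw [hgrp]
    exact mul_mem (cfH g hg) (inv_mem (cfH g' hg'))
  -- the acylindricity set
  obtain ⟨hAfin, hAcard⟩ := hB ε' hε'0 x₀ hx₀Y y hyY hRy
  -- main counting
  have hmain : T.card ≤ M ε' * (T.image F).card := by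
    apply Finset.card_le_mul_card_image
    intro b hb
    obtain ⟨g₀, hg₀T, hg₀b⟩ := Finset.mem_image.mp hb
    have hAc2 : hAfin.toFinset.card ≤ M ε' := by
      rw [← Set.ncard_eq_toFinset_card _ hAfin]; exact hAcard
    refine le_trans ?_ hAc2
    apply Finset.card_le_card_of_injOn (fun g => cc g * (cc g₀)⁻¹)
    · -- maps into hAfin.toFinset
      intro g hgf
      rw [Finset.mem_coe, Finset.mem_filter] at hgf
      obtain ⟨hgT, hgb⟩ := hgf
      rw [Finset.mem_coe, Set.Finite.mem_toFinset]
      constructor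
      · -- dist ((cc g * (cc g₀)⁻¹) • x₀) x₀ ≤ ε'
        have h1 : (cc g * (cc g₀)⁻¹) • x₀ = cc g • ((cc g₀)⁻¹ • x₀) := mul_smul _ _ _
        have h2 := dist_triangle ((cc g * (cc g₀)⁻¹) • x₀) (cc g • x₀) x₀
        have h3 : dist ((cc g * (cc g₀)⁻¹) • x₀) (cc g • x₀) = dist ((cc g₀)⁻¹ • x₀) x₀ := by
          rw [h1, hiso]
        have h4 : dist ((cc g₀)⁻¹ • x₀) x₀ = dist x₀ (cc g₀ • x₀) := by
          rw [← hiso (cc g₀) ((cc g₀)⁻¹ • x₀) x₀, smul_inv_smul]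
        have h5 := hccd g₀ hg₀T
        have h6 := hccd g hgT
        rw [dist_comm x₀ (cc g₀ • x₀)] at h4
        simp only [hε'def]
        linarith [h2, h3, h4, h5, h6]
      · -- dist ((cc g * (cc g₀)⁻¹) • y) y ≤ ε'
        have hFg : F g = F g₀ := by rw [hgb, hg₀b]
        have hτd : (cc g * (cc g₀)⁻¹) * dd g₀ = dd g := by
          have : (cc g)⁻¹ * dd g = (cc g₀)⁻¹ * dd g₀ := hFg
          rw [mul_assoc, ← this]
          group
        have h1 : (cc g * (cc g₀)⁻¹) • (dd g₀ • x₀) = dd g • x₀ := by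
          rw [← mul_smul, hτd]
        have h2 := dist_triangle ((cc g * (cc g₀)⁻¹) • y) ((cc g * (cc g₀)⁻¹) • (dd g₀ • x₀)) y
        rw [hiso, h1] at h2
        have h3 := hddd g hgT
        have h4 := hddd g₀ hg₀T
        rw [dist_comm y (dd g₀ • x₀)] at h2
        simp only [hε'def]
        have h5 : dist (dd g • x₀) y = dist (dd g • x₀) y := rfl
        simp only [hEydef] at h3 h4
        linarith
    · -- injective
      intro g hgf g' hg'f heq
      simp only [Finset.coe_filter, Set.mem_setOf_eq] at hgf hg'f
      exact hccinj g hgf.1 g' hg'f.1 (mul_right_cancel heq)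
  -- image is inside the ball
  have himg : T.image F ⊆ hBallfin.toFinset := by
    intro b hb
    obtain ⟨g, hgT, rfl⟩ := Finset.mem_image.mp hb
    rw [Set.Finite.mem_toFinset]
    constructor
    · have : F g = (cf g hgT)⁻¹ * df g hgT := by
        simp only [hFdef, hccT g hgT, hddT g hgT]
        group
      rw [this]
      exact mul_mem (inv_mem (cfH g hgT)) (dfH g hgT)
    · have h1 : F g • x₀ = (cc g)⁻¹ • (dd g • x₀) := by
        simp only [hFdef]; rw [mul_smul]
      have h2 : dist (F g • x₀) x₀ = dist (dd g • x₀) (cc g • x₀) := by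
        rw [h1, ← hiso (cc g) ((cc g)⁻¹ • (dd g • x₀)) x₀, smul_inv_smul]
      have h3 := dist_triangle4 (dd g • x₀) y x₀ (cc g • x₀)
      rw [h2]
      simp only [hρdef]
      linarith [h3, hddd g hgT, hccd g hgT, dist_comm y x₀, dist_comm x₀ (cc g • x₀), hyx₀]
  calc T.card ≤ M ε' * (T.image F).card := hmain
    _ ≤ M ε' * hBallfin.toFinset.card := Nat.mul_le_mul_left _ (Finset.card_le_card himg)
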